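/- Let n ≥ 1, define L : M_n(ℂ) → M_n(ℂ) by L(A)_{ij} = |i−j| a_{ij}, the gradient form Γ(A,B) = ( L(Aᴴ)B + Aᴴ L(B) − L(AᴴB) ) / 2, and the iterated gradient form Γ₂(A,B) = ( Γ(L(A),B) + Γ(A,L(B)) − L(Γ(A,B)) ) / 2. Then for every A ∈ M_n(ℂ), the matrix Γ₂(A,A) is positive semidefinite; i.e. the semigroup S_t = e^{−tL} satisfies the Γ₂ ≥ 0 condition. -/
import Mathlib


open scoped Matrix ComplexOrder

/-- The generator `L(A)_{ij} = |i-j| a_{ij}` of the Schur multiplier semigroup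
`S_t(A)_{ij} = e^{-t|i-j|} a_{ij}`. -/
noncomputable def schurGen (n : ℕ) (A : Matrix (Fin n) (Fin n) ℂ) :
    Matrix (Fin n) (Fin n) ℂ :=
  fun i j => ((|((i : ℕ) : ℝ) - ((j : ℕ) : ℝ)| : ℝ) : ℂ) * A i j

/-- The gradient form `Γ(A,B) = (L(Aᴴ)B + Aᴴ L(B) − L(AᴴB))/2`. -/
noncomputable def gradForm (n : ℕ) (A B : Matrix (Fin n) (Fin n) ℂ) :
    Matrix (Fin n) (Fin n) ℂ :=
  (2 : ℂ)⁻¹ • (schurGen n Aᴴ * B + Aᴴ * schurGen n B - schurGen n (Aᴴ * B))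

/-- The iterated gradient form `Γ₂(A,B) = (Γ(L(A),B) + Γ(A,L(B)) − L(Γ(A,B)))/2`. -/
noncomputable def gradForm₂ (n : ℕ) (A B : Matrix (Fin n) (Fin n) ℂ) :
    Matrix (Fin n) (Fin n) ℂ :=
  (2 : ℂ)⁻¹ •
    (gradForm n (schurGen n A) B + gradForm n A (schurGen n B) -
      schurGen n (gradForm n A B))

/-! ### Auxiliary lemmas -/

/-- Indicator of the discrete interval between `k` and `i`. -/
noncomputable def schurChi (k i t : ℕ) : ℝ :=
  if min i k ≤ t ∧ t < max i k then 1 else 0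

lemma abs_cast_sub (a b : ℕ) : |(a : ℝ) - b| = ((max a b - min a b : ℕ) : ℝ) := by
  rcases le_total a b with h | h
  · rw [max_eq_right h, min_eq_left h, Nat.cast_sub h,
      abs_of_nonpos (by simp [h, Nat.cast_le])]
    ring
  · rw [max_eq_left h, min_eq_right h, Nat.cast_sub h,
      abs_of_nonneg (by simp [h, Nat.cast_le])]

/-- The overlap count of two discrete intervals gives the kernel
`(|k-i| + |k-j| - |i-j|)/2`. -/
lemma schurChi_sum (n k i j : ℕ) (hk : k < n) (hi : i < n) (hj : j < n) :
    ∑ t : Fin n, schurChi k i t * schurChi k j t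
      = (|(k : ℝ) - i| + |(k : ℝ) - j| - |(i : ℝ) - j|) / 2 := by
  have hsum : ∑ t : Fin n, schurChi k i t * schurChi k j t
      = ((Finset.Ico (max (min i k) (min j k)) (min (max i k) (max j k))).card : ℝ) := by
    rw [Fin.sum_univ_eq_sum_range (fun t => schurChi k i t * schurChi k j t)]
    have : ∀ t, schurChi k i t * schurChi k j t
        = if max (min i k) (min j k) ≤ t ∧ t < min (max i k) (max j k) then (1:ℝ) else 0 := by
      intro t
      simp only [schurChi, ite_and]
      by_cases h1 : min i k ≤ t <;> by_cases h2 : t < max i k <;>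
        by_cases h3 : min j k ≤ t <;> by_cases h4 : t < max j k <;>
        simp [h1, h2, h3, h4] <;> omega
    simp only [this]
    rw [Finset.sum_boole]
    congr 1
    congr 1
    ext t
    simp only [Finset.mem_filter, Finset.mem_range, Finset.mem_Ico]
    omega
  rw [hsum, Nat.card_Ico]
  rw [abs_cast_sub, abs_cast_sub, abs_cast_sub]
  have hZ : max i j - min i j ≤ (max k i - min k i) + (max k j - min k j) := by omega
  have key : (min (max i k) (max j k) - max (min i k) (min j k)) * 2
      = (max k i - min k i) + (max k j - min k j) - (max i j - min i j) := by omega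
  have := congrArg (Nat.cast : ℕ → ℝ) key
  push_cast [Nat.cast_sub hZ] at this
  linarith

/-- The complex-valued length kernel `|i - j|`. -/
noncomputable def psiC (i j : ℕ) : ℂ := ((|(i : ℝ) - j| : ℝ) : ℂ)

lemma gradForm_apply (n : ℕ) (A B : Matrix (Fin n) (Fin n) ℂ) (i j : Fin n) :
    gradForm n A B i j
      = ∑ k : Fin n, (2 : ℂ)⁻¹ * (psiC k i + psiC k j - psiC i j)
          * ((starRingEnd ℂ) (A k i) * B k j) := by
  simp only [gradForm, schurGen, Matrix.smul_apply, Matrix.sub_apply, Matrix.add_apply,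
    Matrix.mul_apply, Matrix.conjTranspose_apply, psiC, smul_eq_mul, Finset.mul_sum]
  rw [← Finset.sum_add_distrib, ← Finset.sum_sub_distrib, Finset.mul_sum]
  refine Finset.sum_congr rfl fun k _ => ?_
  rw [abs_sub_comm ((i:ℕ):ℝ) ((k:ℕ):ℝ)]
  simp only [starRingEnd_apply]
  ring

lemma gradForm₂_apply (n : ℕ) (A : Matrix (Fin n) (Fin n) ℂ) (i j : Fin n) :
    gradForm₂ n A A i j
      = ∑ k : Fin n, (4 : ℂ)⁻¹ * (psiC k i + psiC k j - psiC i j) ^ 2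
          * ((starRingEnd ℂ) (A k i) * A k j) := by
  simp only [gradForm₂, Matrix.smul_apply, Matrix.sub_apply, Matrix.add_apply,
    smul_eq_mul, gradForm_apply, schurGen, Matrix.conjTranspose_apply]
  rw [← Finset.sum_add_distrib, Finset.mul_sum, ← Finset.sum_sub_distrib, Finset.mul_sum]
  refine Finset.sum_congr rfl fun k _ => ?_
  simp only [map_mul, Complex.conj_ofReal, psiC]
  ring

/-- Bakry's `Γ₂ ≥ 0` condition for the semigroup `S_t = e^{-tL}`: for every
`A ∈ M_n(ℂ)`, the matrix `Γ₂(A,A)` is positive semidefinite. -/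
theorem gradForm₂_posSemidef (n : ℕ) (hn : 1 ≤ n) (A : Matrix (Fin n) (Fin n) ℂ) :
    (gradForm₂ n A A).PosSemidef := by
  classical
  set B : Matrix (Fin n × Fin n × Fin n) (Fin n) ℂ :=
    Matrix.of fun p i =>
      A p.1 i * ((schurChi p.1 i p.2.1 : ℝ) : ℂ) * ((schurChi p.1 i p.2.2 : ℝ) : ℂ) with hBdef
  have hB : gradForm₂ n A A = Bᴴ * B := by
    ext i j
    rw [gradForm₂_apply, Matrix.mul_apply]
    rw [Fintype.sum_prod_type]
    refine Finset.sum_congr rfl fun k _ => ?_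
    have hterm : ∀ t s : Fin n,
        Bᴴ i (k, t, s) * B (k, t, s) j
          = ((starRingEnd ℂ) (A k i) * A k j)
              * (((schurChi k i t * schurChi k j t : ℝ) : ℂ)
                * ((schurChi k i s * schurChi k j s : ℝ) : ℂ)) := by
      intro t s
      simp only [hBdef, Matrix.conjTranspose_apply, Matrix.of_apply, star_mul',
        starRingEnd_apply]
      push_cast
      rw [Complex.star_def, Complex.conj_ofReal, Complex.conj_ofReal]
      ring
    have hS := schurChi_sum n k i j k.isLt i.isLt j.isLt
    calc (4 : ℂ)⁻¹ * (psiC k i + psiC k j - psiC i j) ^ 2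
            * ((starRingEnd ℂ) (A k i) * A k j)
        = ((starRingEnd ℂ) (A k i) * A k j)
            * ((((∑ t : Fin n, schurChi k i t * schurChi k j t : ℝ)) : ℂ)
              * (((∑ s : Fin n, schurChi k i s * schurChi k j s : ℝ)) : ℂ)) := by
          rw [hS]
          simp only [psiC]
          push_cast
          ring
      _ = ∑ t : Fin n, ∑ s : Fin n, Bᴴ i (k, t, s) * B (k, t, s) j := by
          simp only [hterm]
          push_cast
          rw [Finset.sum_mul_sum]
          rw [Finset.mul_sum]
          refine Finset.sum_congr rfl fun t _ => ?_
          rw [Finset.mul_sum]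
      _ = ∑ y : Fin n × Fin n, Bᴴ i (k, y) * B (k, y) j := by
          rw [Fintype.sum_prod_type]
  rw [hB]
  exact Matrix.posSemidef_conjTranspose_mul_self B
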